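/- Let p be an odd prime, a = 2b + 1 a positive odd integer, j = (ap − 1)/2, and ℓ ≥ 1. Then the number k of m in {1, ..., j} with v_p(2m − 1) = ℓ satisfies (p − 1)·⌊b/p^ℓ⌋ ≤ k ≤ (p − 1)·⌊(b + p^ℓ)/p^ℓ⌋. -/

import Mathlib

lemma countDvd (q : ℕ) (hq : Odd q) (j : ℕ) :
    ((Finset.Ioc 0 j).filter (fun m => q ∣ 2 * m - 1)).card = (j + q / 2) / q := by
  obtain ⟨h, rfl⟩ := hq
  have hh : (2 * h + 1) / 2 = h := by omega
  rw [hh]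
  induction j with
  | zero =>
    simp [Nat.div_eq_of_lt (show h < 2 * h + 1 by omega)]
  | succ j ih =>
    have hins : Finset.Ioc 0 (j + 1) = insert (j + 1) (Finset.Ioc 0 j) := by
      ext x; simp [Finset.mem_Ioc, Finset.mem_insert]; omega
    have hnm : j + 1 ∉ Finset.Ioc 0 j := by simp
    have hiff : ((2 * h + 1) ∣ 2 * (j + 1) - 1) ↔ ((2 * h + 1) ∣ (j + h + 1)) := by
      constructor
      · intro hd
        have hd2 : (2 * h + 1) ∣ 2 * (j + h + 1) := by
          have : 2 * (j + h + 1) = (2 * (j + 1) - 1) + (2 * h + 1) := by omega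
          rw [this]; exact Nat.dvd_add hd dvd_rfl
        exact ((Odd.coprime_two_right ⟨h, rfl⟩).dvd_of_dvd_mul_left hd2)
      · intro hd
        have hd2 : (2 * h + 1) ∣ 2 * (j + h + 1) := Dvd.dvd.mul_left hd 2
        have : 2 * (j + 1) - 1 = 2 * (j + h + 1) - (2 * h + 1) := by omega
        rw [this]; exact Nat.dvd_sub hd2 dvd_rfl
    have hsucc : (j + 1 + h) / (2 * h + 1)
        = (j + h) / (2 * h + 1) + if (2 * h + 1) ∣ (j + h + 1) then 1 else 0 := by
      have := Nat.succ_div (a := j + h) (b := 2 * h + 1)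
      simpa [show j + h + 1 = j + 1 + h by omega] using this
    rw [hins, Finset.filter_insert, hsucc, ← ih]
    by_cases hd : (2 * h + 1) ∣ 2 * (j + 1) - 1
    · rw [if_pos hd, if_pos (hiff.mp hd),
        Finset.card_insert_of_notMem (fun hmem => hnm (Finset.mem_of_mem_filter _ hmem))]
    · rw [if_neg hd, if_neg (fun hc => hd (hiff.mpr hc)), add_zero]

theorem stmt_7 (p b ℓ : ℕ) (hp : p.Prime) (hodd : Odd p) (hℓ : 1 ≤ ℓ) :
    (p - 1) * (b / p ^ ℓ)
      ≤ ((Finset.Icc 1 (((2 * b + 1) * p - 1) / 2)).filter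
          (fun m => padicValNat p (2 * m - 1) = ℓ)).card ∧
    ((Finset.Icc 1 (((2 * b + 1) * p - 1) / 2)).filter
        (fun m => padicValNat p (2 * m - 1) = ℓ)).card
      ≤ (p - 1) * ((b + p ^ ℓ) / p ^ ℓ) := by
  obtain ⟨u, hu⟩ := hodd
  have hp2 : 2 ≤ p := hp.two_le
  have hu1 : 1 ≤ u := by omega
  have hp3 : 3 ≤ p := by omega
  set q := p ^ ℓ with hqdef
  have hqodd : Odd q := (Odd.pow ⟨u, hu⟩ : Odd (p ^ ℓ))
  obtain ⟨v, hv⟩ := hqodd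
  have hqp : p ≤ q := Nat.le_self_pow (by omega) p
  have hq0 : 0 < q := by omega
  set J := ((2 * b + 1) * p - 1) / 2 with hJdef
  -- J = b*p + u
  have hJ : J = b * p + u := by
    have h1 : (2 * b + 1) * p = 2 * (b * p + u) + 1 := by rw [hu]; ring
    rw [hJdef, h1]
    generalize b * p + u = w
    omega
  -- convert Icc to Ioc
  have hIcc : Finset.Icc 1 J = Finset.Ioc 0 J := by
    ext x; simp [Finset.mem_Icc, Finset.mem_Ioc]; omega
  -- rewrite the filter condition
  have hkey : ∀ m ∈ Finset.Ioc 0 J,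
      (padicValNat p (2 * m - 1) = ℓ) ↔ (q ∣ 2 * m - 1 ∧ ¬ p ^ (ℓ + 1) ∣ 2 * m - 1) := by
    intro m hm
    have hm1 : 1 ≤ m := (Finset.mem_Ioc.mp hm).1
    have hn : 2 * m - 1 ≠ 0 := by omega
    rw [hqdef, hp.pow_dvd_iff_le_factorization hn, hp.pow_dvd_iff_le_factorization hn,
      Nat.factorization_def _ hp]
    omega
  have hfilter : (Finset.Icc 1 J).filter (fun m => padicValNat p (2 * m - 1) = ℓ)
      = ((Finset.Ioc 0 J).filter (fun m => q ∣ 2 * m - 1))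
        \ ((Finset.Ioc 0 J).filter (fun m => p ^ (ℓ + 1) ∣ 2 * m - 1)) := by
    rw [hIcc]
    ext m
    simp only [Finset.mem_filter, Finset.mem_sdiff]
    constructor
    · rintro ⟨hm, hpv⟩
      have := (hkey m hm).mp hpv
      exact ⟨⟨hm, this.1⟩, fun hc => this.2 hc.2⟩
    · rintro ⟨⟨hm, h1⟩, h2⟩
      exact ⟨hm, (hkey m hm).mpr ⟨h1, fun hc => h2 ⟨hm, hc⟩⟩⟩
  have hsub : ((Finset.Ioc 0 J).filter (fun m => p ^ (ℓ + 1) ∣ 2 * m - 1))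
      ⊆ ((Finset.Ioc 0 J).filter (fun m => q ∣ 2 * m - 1)) :=
    by
      intro m hm
      rw [Finset.mem_filter] at hm ⊢
      exact ⟨hm.1, (pow_dvd_pow p (Nat.le_succ ℓ)).trans hm.2⟩
  have hQodd : Odd (p ^ (ℓ + 1)) := (Odd.pow ⟨u, hu⟩ : Odd (p ^ (ℓ + 1)))
  have hcard : ((Finset.Icc 1 J).filter (fun m => padicValNat p (2 * m - 1) = ℓ)).card
      = (J + q / 2) / q - (J + p ^ (ℓ + 1) / 2) / p ^ (ℓ + 1) := by
    rw [hfilter, Finset.card_sdiff_of_subset hsub, countDvd q ⟨v, hv⟩ J, countDvd _ hQodd J]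
  -- compute the halves
  have hq2 : q / 2 = v := by omega
  have hQ : p ^ (ℓ + 1) = q * p := by rw [hqdef, pow_succ]
  have hQ2 : p ^ (ℓ + 1) / 2 = v * p + u := by
    have h1 : q * p = 2 * (v * p + u) + 1 := by rw [hv, hu]; ring
    rw [hQ, h1]
    generalize v * p + u = w
    omega
  -- second term equals (b+v)/q
  set c := b / q with hc
  set r := b % q with hr
  have hbcr : q * c + r = b := Nat.div_add_mod b q
  have hrq : r < q := Nat.mod_lt _ hq0
  have hterm2 : (J + p ^ (ℓ + 1) / 2) / p ^ (ℓ + 1) = c + (r + v) / q := by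
    have h1 : J + p ^ (ℓ + 1) / 2 = p * (b + v) + 2 * u := by rw [hQ2, hJ]; ring
    have h2 : (p * (b + v) + 2 * u) / p = b + v := by
      rw [Nat.mul_add_div (by omega : 0 < p), Nat.div_eq_of_lt (by omega : 2 * u < p), add_zero]
    have h3 : (b + v) / q = c + (r + v) / q := by
      rw [← hbcr]
      have : q * c + r + v = q * c + (r + v) := by ring
      rw [this, Nat.mul_add_div hq0]
    rw [h1, hQ, mul_comm q p, ← Nat.div_div_eq_div_mul, h2, h3]
  have hterm1 : (J + q / 2) / q = c * p + (r * p + u + v) / q := by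
    have h1 : J + q / 2 = q * (c * p) + (r * p + u + v) := by
      rw [hq2, hJ, ← hbcr]; ring
    rw [h1, Nat.mul_add_div hq0]
  obtain ⟨D, hD⟩ : ∃ D', (r * p + u + v) / q = D' := ⟨_, rfl⟩
  obtain ⟨e, he⟩ : ∃ e', (r + v) / q = e' := ⟨_, rfl⟩
  rw [hD] at hterm1
  rw [he] at hterm2
  have hvq : v < q := by omega
  have he1 : e ≤ 1 := by
    have h := (Nat.div_lt_iff_lt_mul hq0).mpr (show r + v < 2 * q by omega)
    rw [he] at h
    omega
  have heD : e ≤ D := by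
    by_cases hcse : q ≤ r + v
    · have hr2 : v + 1 ≤ r := by omega
      have h3r : 3 * r ≤ r * p := by rw [mul_comm r p]; exact Nat.mul_le_mul_right r hp3
      have hq3 : q ≤ 3 * r := by omega
      have hle : q ≤ r * p + u + v := by omega
      have : 1 ≤ D := hD ▸ (Nat.one_le_div_iff hq0).mpr hle
      omega
    · have : e = 0 := by rw [← he]; exact Nat.div_eq_of_lt (by omega)
      omega
  have hDp : D ≤ p := by
    have h1 : (r + 1) * p ≤ q * p := Nat.mul_le_mul_right p (by omega)
    have h1' : r * p + p ≤ q * p := by rw [Nat.succ_mul] at h1; exact h1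
    have h2 : (p + 1) * q = q * p + q := by ring
    have hup : u < p := by omega
    have : D < p + 1 := by
      rw [← hD, Nat.div_lt_iff_lt_mul hq0, h2]
      linarith
    omega
  have hBnd : D ≤ p - 1 + e := by
    by_cases hcse : q ≤ r + v
    · have : 1 ≤ e := he ▸ (Nat.one_le_div_iff hq0).mpr hcse
      omega
    · have hrv : r ≤ v := by omega
      have h1 : r * p ≤ v * p := Nat.mul_le_mul_right p hrv
      have h2 : p * q = 2 * (v * p) + p := by rw [hv, hu]; ring
      have h3 : v ≤ v * p := Nat.le_mul_of_pos_right v (by omega)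
      have hup : u < p := by omega
      have hDlt : D < p := by
        rw [← hD, Nat.div_lt_iff_lt_mul hq0]
        linarith
      omega
  have hbq1 : (b + q) / q = c + 1 := by
    have h1 : b + q = q * (c + 1) + r := by rw [← hbcr]; ring
    rw [h1, Nat.mul_add_div hq0, Nat.div_eq_of_lt hrq, add_zero]
  have hcp : c ≤ c * p := Nat.le_mul_of_pos_right c (by omega)
  have h4 : (p - 1) * c + c = c * p := by
    rw [Nat.sub_one_mul, mul_comm p c]
    exact Nat.sub_add_cancel hcp
  have hkval : c * p + D - (c + e) = (p - 1) * c + (D - e) := by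
    obtain ⟨X, hX⟩ : ∃ X, (p - 1) * c = X := ⟨_, rfl⟩
    obtain ⟨Y, hY⟩ : ∃ Y, c * p = Y := ⟨_, rfl⟩
    rw [hX, hY] at h4 ⊢
    omega
  rw [hcard, hterm1, hterm2, hbq1, hkval]
  constructor
  · exact Nat.le_add_right _ _
  · rw [Nat.mul_succ]
    exact Nat.add_le_add_left (by omega) _
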